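/- Let H be the output of the greedy spanner algorithm with parameter δ on a graph G with n vertices. Then H is a 2δ-approximate spanner of G, and |E(H)| ≤ 2·n^(1+1/δ). -/

import Mathlib

open SimpleGraph Finset


lemma walk_split {V : Type*} {Γ : SimpleGraph V} {u v : V} :
    ∀ {x y : V} (p : Γ.Walk x y), s(u,v) ∈ p.edges →
    (∃ (q : Γ.Walk x u) (r : Γ.Walk v y), q.length + 1 + r.length = p.length ∧
      q.edges ++ s(u,v) :: r.edges = p.edges) ∨
    (∃ (q : Γ.Walk x v) (r : Γ.Walk u y), q.length + 1 + r.length = p.length ∧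
      q.edges ++ s(u,v) :: r.edges = p.edges) := by
  intro x y p
  induction p with
  | nil => simp
  | @cons a b c h' p' ih =>
    intro hmem
    rw [Walk.edges_cons, List.mem_cons] at hmem
    rcases hmem with heq | hmem
    · rw [Sym2.eq_iff] at heq
      rcases heq with ⟨hu, hv⟩ | ⟨hu, hv⟩
      · subst hu; subst hv
        exact Or.inl ⟨Walk.nil, p', by simp; omega, by simp⟩
      · subst hu; subst hv
        refine Or.inr ⟨Walk.nil, p', by simp; omega, by simp [Sym2.eq_swap]⟩
    · rcases ih hmem with ⟨q, r, hlen, hedg⟩ | ⟨q, r, hlen, hedg⟩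
      · exact Or.inl ⟨Walk.cons h' q, r, by simp [← hlen]; omega, by simp [← hedg]⟩
      · exact Or.inr ⟨Walk.cons h' q, r, by simp [← hlen]; omega, by simp [← hedg]⟩

/-- No cycles of length `≤ 2δ+1`: every walk between endpoints of an edge that avoids the
edge itself is long. -/
def NoShortCyc {V : Type*} (δ : ℕ) (Γ : SimpleGraph V) : Prop :=
  ∀ ⦃a b : V⦄, Γ.Adj a b → ∀ p : Γ.Walk a b, s(a,b) ∉ p.edges → 2*δ < p.length

lemma noShortCyc_sup {V : Type*} {δ : ℕ} {H : SimpleGraph V} {u v : V} (hne : u ≠ v)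
    (hP : NoShortCyc δ H)
    (hdist : ∀ p : H.Walk u v, 2*δ < p.length) :
    NoShortCyc δ (H ⊔ SimpleGraph.fromEdgeSet {s(u,v)}) := by
  classical
  intro a b hab p0 hpe0
  by_contra hlen0
  push_neg at hlen0
  have hsub : ∀ e, e ∈ (H ⊔ SimpleGraph.fromEdgeSet {s(u,v)}).edgeSet → e ≠ s(u,v) →
      e ∈ H.edgeSet := by
    intro e he hne'
    rw [edgeSet_sup, edgeSet_fromEdgeSet] at he
    rcases he with h | h
    · exact h
    · exact absurd h.1 (by simpa using hne')
  obtain ⟨p, hpath, hplen, hpes⟩ :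
      ∃ p : (H ⊔ SimpleGraph.fromEdgeSet {s(u,v)}).Walk a b,
        p.IsPath ∧ p.length ≤ 2*δ ∧ p.edges ⊆ p0.edges :=
    ⟨p0.bypass, Walk.bypass_isPath p0, le_trans (Walk.length_bypass_le p0) hlen0,
      Walk.edges_bypass_subset p0⟩
  have hpe : s(a,b) ∉ p.edges := fun h => hpe0 (hpes h)
  by_cases hs : s(a,b) = s(u,v)
  · have htr : ∀ e ∈ p.edges, e ∈ H.edgeSet := fun e he =>
      hsub e (Walk.edges_subset_edgeSet p he) (fun h => hpe (by rw [hs]; exact h ▸ he))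
    rw [Sym2.eq_iff] at hs
    rcases hs with ⟨ha, hb⟩ | ⟨ha, hb⟩
    · subst ha; subst hb
      have := hdist (p.transfer H htr)
      rw [Walk.length_transfer] at this
      omega
    · subst ha; subst hb
      have := hdist (p.transfer H htr).reverse
      rw [Walk.length_reverse, Walk.length_transfer] at this
      omega
  · have hab' : H.Adj a b := by
      rcases hab with h | h
      · exact h
      · exact absurd (by simpa using h.1) hs
    by_cases huv : s(u,v) ∈ p.edges
    · have hnd : p.edges.Nodup := hpath.isTrail.edges_nodup
      rcases walk_split p huv with ⟨q, r, hlen2, hedg⟩ | ⟨q, r, hlen2, hedg⟩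
      · rw [← hedg] at hnd
        have hqn : s(u,v) ∉ q.edges := fun h =>
          (List.disjoint_of_nodup_append hnd) h (List.mem_cons_self)
        have hrn : s(u,v) ∉ r.edges := by
          have := (List.nodup_append.mp hnd).2.1
          rw [List.nodup_cons] at this
          exact this.1
        have hq : ∀ e ∈ q.edges, e ∈ H.edgeSet := fun e he =>
          hsub e (Walk.edges_subset_edgeSet q he) (fun h => hqn (h ▸ he))
        have hr : ∀ e ∈ r.edges, e ∈ H.edgeSet := fun e he =>
          hsub e (Walk.edges_subset_edgeSet r he) (fun h => hrn (h ▸ he))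
        have hw := hdist
          ((q.transfer H hq).reverse.append (Walk.cons hab' (r.transfer H hr).reverse))
        rw [Walk.length_append, Walk.length_reverse, Walk.length_cons, Walk.length_reverse,
          Walk.length_transfer, Walk.length_transfer] at hw
        omega
      · rw [← hedg] at hnd
        have hqn : s(u,v) ∉ q.edges := fun h =>
          (List.disjoint_of_nodup_append hnd) h (List.mem_cons_self)
        have hrn : s(u,v) ∉ r.edges := by
          have := (List.nodup_append.mp hnd).2.1
          rw [List.nodup_cons] at this
          exact this.1
        have hq : ∀ e ∈ q.edges, e ∈ H.edgeSet := fun e he =>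
          hsub e (Walk.edges_subset_edgeSet q he) (fun h => hqn (h ▸ he))
        have hr : ∀ e ∈ r.edges, e ∈ H.edgeSet := fun e he =>
          hsub e (Walk.edges_subset_edgeSet r he) (fun h => hrn (h ▸ he))
        have hw := hdist
          ((q.transfer H hq).reverse.append
            (Walk.cons hab' (r.transfer H hr).reverse)).reverse
        rw [Walk.length_reverse, Walk.length_append, Walk.length_reverse, Walk.length_cons,
          Walk.length_reverse, Walk.length_transfer, Walk.length_transfer] at hw
        omega
    · have htr : ∀ e ∈ p.edges, e ∈ H.edgeSet := fun e he =>
        hsub e (Walk.edges_subset_edgeSet p he) (fun h => huv (h ▸ he))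
      have := hP hab' (p.transfer H htr) (by rwa [Walk.edges_transfer])
      rw [Walk.length_transfer] at this
      omega


lemma noShortCyc_bot {V : Type*} (δ : ℕ) : NoShortCyc δ (⊥ : SimpleGraph V) := by
  intro a b hab
  simp at hab

open scoped Classical in
/-- The greedy spanner: process the given edges in order, adding an edge `(u,v)` to `H`
exactly when the current distance in `H` between `u` and `v` exceeds `2δ`
(in particular when `u` and `v` are not yet connected). -/
noncomputable def greedySpanner {V : Type*} (δ : ℕ) : List (V × V) → SimpleGraph V
  | [] => ⊥
  | e :: l =>
    let H := greedySpanner δ l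
    if ¬ H.Reachable e.1 e.2 ∨ 2 * δ < H.dist e.1 e.2 then
      H ⊔ SimpleGraph.fromEdgeSet {s(e.1, e.2)}
    else H

lemma gs_le_mono {V : Type*} (δ : ℕ) (e : V × V) (l : List (V × V)) :
    greedySpanner δ l ≤ greedySpanner δ (e :: l) := by
  simp only [greedySpanner]
  split_ifs
  · exact le_sup_left
  · exact le_refl _

lemma dist_anti' {V : Type*} {G G' : SimpleGraph V} (h : G ≤ G') {u v : V}
    (hr : G.Reachable u v) : G'.dist u v ≤ G.dist u v := by
  obtain ⟨p, hp⟩ := hr.exists_walk_length_eq_dist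
  rw [← hp]
  have := SimpleGraph.dist_le (p.mapLe h)
  simpa using this

lemma gs_edge_invariant {V : Type*} (δ : ℕ) (hδ : 1 ≤ δ) (l : List (V × V)) :
    ∀ e ∈ l, (greedySpanner δ l).Reachable e.1 e.2 ∧
      (greedySpanner δ l).dist e.1 e.2 ≤ 2*δ := by
  induction l with
  | nil => simp
  | cons f l ih =>
    intro e he
    rcases List.mem_cons.mp he with rfl | he
    · simp only [greedySpanner]
      split_ifs with hc
      · have hne : e.1 ≠ e.2 := by
          intro h
          rcases hc with hc | hc
          · exact hc (h ▸ Reachable.refl _)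
          · rw [h, SimpleGraph.dist_self] at hc; omega
        have hadj : (greedySpanner δ l ⊔ SimpleGraph.fromEdgeSet {s(e.1,e.2)}).Adj e.1 e.2 := by
          rw [sup_adj, fromEdgeSet_adj]; exact Or.inr ⟨rfl, hne⟩
        refine ⟨hadj.reachable, ?_⟩
        rw [SimpleGraph.dist_eq_one_iff_adj.mpr hadj]; omega
      · push_neg at hc
        exact ⟨hc.1, hc.2⟩
    · obtain ⟨hr, hd⟩ := ih e he
      have hle := gs_le_mono δ f l
      exact ⟨hr.mono hle, le_trans (dist_anti' hle hr) hd⟩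

lemma gs_le {V : Type*} (δ : ℕ) (G : SimpleGraph V) (l : List (V × V))
    (hmem : ∀ e ∈ l, G.Adj e.1 e.2) : greedySpanner δ l ≤ G := by
  induction l with
  | nil => exact bot_le
  | cons f l ih =>
    have hG := hmem f (List.mem_cons_self (a := f) (l := l))
    have ih' := ih fun e he => hmem e (List.mem_cons_of_mem _ he)
    simp only [greedySpanner]
    split_ifs
    · refine sup_le ih' ?_
      intro a b hab
      rw [fromEdgeSet_adj] at hab
      obtain ⟨h1, -⟩ := hab
      rw [Set.mem_singleton_iff, Sym2.eq_iff] at h1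
      rcases h1 with ⟨rfl, rfl⟩ | ⟨rfl, rfl⟩
      · exact hG
      · exact hG.symm
    · exact ih'

lemma gs_noShortCyc {V : Type*} (δ : ℕ) (l : List (V × V)) :
    NoShortCyc δ (greedySpanner δ l) := by
  induction l with
  | nil => exact noShortCyc_bot δ
  | cons f l ih =>
    simp only [greedySpanner]
    split_ifs with hc
    · have hne : f.1 ≠ f.2 := by
        intro h
        rcases hc with hc | hc
        · exact hc (h ▸ Reachable.refl _)
        · rw [h, SimpleGraph.dist_self] at hc; omega
      refine noShortCyc_sup hne ih ?_
      intro p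
      rcases hc with hc | hc
      · exact absurd ⟨p⟩ hc
      · exact lt_of_lt_of_le hc (SimpleGraph.dist_le p)
    · exact ih

lemma gs_stretch {V : Type*} {δ : ℕ} {G H : SimpleGraph V}
    (hinv : ∀ a b, G.Adj a b → H.Reachable a b ∧ H.dist a b ≤ 2*δ) :
    ∀ u v : V, G.Reachable u v → H.Reachable u v ∧ H.dist u v ≤ 2*δ*G.dist u v := by
  have key : ∀ {u v : V} (p : G.Walk u v),
      H.Reachable u v ∧ H.dist u v ≤ 2*δ*p.length := by
    intro u v p
    induction p with
    | nil => exact ⟨Reachable.refl _, by simp⟩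
    | cons h p ih =>
      obtain ⟨hr1, hd1⟩ := hinv _ _ h
      obtain ⟨hr2, hd2⟩ := ih
      refine ⟨hr1.trans hr2, ?_⟩
      obtain ⟨p1, hp1⟩ := hr1.exists_walk_length_eq_dist
      obtain ⟨p2, hp2⟩ := hr2.exists_walk_length_eq_dist
      have hle := SimpleGraph.dist_le (p1.append p2)
      rw [Walk.length_append, hp1, hp2] at hle
      rw [Walk.length_cons]
      calc H.dist _ _ ≤ _ := hle
        _ ≤ 2*δ + 2*δ*p.length := by omega
        _ = 2*δ*(p.length+1) := by ring
  intro u v hr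
  obtain ⟨p, hp⟩ := hr.exists_walk_length_eq_dist
  have := key p
  rwa [hp] at this

lemma support_dist {V : Type*} {Γ : SimpleGraph V} {x y w : V} [DecidableEq V]
    (p : Γ.Walk x y) (hw : w ∈ p.support) :
    Γ.dist x w + Γ.dist w y ≤ p.length ∧ Γ.Reachable x w ∧ Γ.Reachable w y := by
  have h1 := SimpleGraph.dist_le (p.takeUntil w hw)
  have h2 := SimpleGraph.dist_le (p.dropUntil w hw)
  have h3 := congrArg SimpleGraph.Walk.length (p.take_spec hw)
  rw [Walk.length_append] at h3
  exact ⟨by omega, ⟨p.takeUntil w hw⟩, ⟨p.dropUntil w hw⟩⟩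

lemma noShortCyc_anti {V : Type*} {δ : ℕ} {Γ' Γ : SimpleGraph V} (h : Γ' ≤ Γ)
    (hP : NoShortCyc δ Γ) : NoShortCyc δ Γ' := by
  intro a b hab p hpe
  have hadj : Γ.Adj a b := h hab
  have hpe' : s(a,b) ∉ (p.mapLe h).edges := by
    simpa using hpe
  have := hP hadj (p.mapLe h) hpe'
  simpa using this

def restrict' {V : Type*} (Γ : SimpleGraph V) (S : Set V) : SimpleGraph V where
  Adj a b := Γ.Adj a b ∧ a ∈ S ∧ b ∈ S
  symm := ⟨fun a b h => ⟨h.1.symm, h.2.2, h.2.1⟩⟩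
  loopless := ⟨fun a h => Γ.loopless.irrefl a h.1⟩

@[simp] lemma restrict'_adj {V : Type*} {Γ : SimpleGraph V} {S : Set V} {a b : V} :
    (restrict' Γ S).Adj a b ↔ Γ.Adj a b ∧ a ∈ S ∧ b ∈ S := Iff.rfl

lemma moore {V : Type*} [Fintype V] {δ k : ℕ} (Γ : SimpleGraph V) [DecidableRel Γ.Adj]
    (hP : NoShortCyc δ Γ) (S : Finset V) (hS : S.Nonempty)
    (hdeg : ∀ a ∈ S, k + 1 ≤ (S.filter (fun b => Γ.Adj a b)).card) :
    k ^ δ ≤ Fintype.card V := by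
  classical
  set Γ' : SimpleGraph V := restrict' Γ (S : Set V) with hΓ'
  have hle : Γ' ≤ Γ := fun a b h => h.1
  have hP' : NoShortCyc δ Γ' := noShortCyc_anti hle hP
  obtain ⟨x, hx⟩ := hS
  set L : ℕ → Finset V :=
    fun i => univ.filter (fun w => Γ'.Reachable x w ∧ Γ'.dist x w = i) with hL
  have hmemL : ∀ i w, w ∈ L i ↔ Γ'.Reachable x w ∧ Γ'.dist x w = i := by
    intro i w; simp [hL]
  have hnbr : ∀ y ∈ S, k + 1 ≤ (univ.filter (fun b => Γ'.Adj y b)).card := by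
    intro y hy
    have heq : S.filter (fun b => Γ.Adj y b) = univ.filter (fun b => Γ'.Adj y b) := by
      ext b
      simp only [mem_filter, mem_univ, true_and, hΓ', restrict'_adj, Finset.mem_coe]
      constructor
      · rintro ⟨h1, h2⟩; exact ⟨h2, hy, h1⟩
      · rintro ⟨h1, _, h2⟩; exact ⟨h2, h1⟩
    rw [← heq]; exact hdeg y hy
  have hLS : ∀ i y, y ∈ L i → y ∈ S := by
    intro i y hy
    obtain ⟨hr, -⟩ := (hmemL i y).mp hy
    obtain ⟨p⟩ := hr.symm
    cases p with
    | nil => exact hx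
    | cons h p => exact h.2.1
  have F1 : ∀ y b, Γ'.Adj y b → Γ'.Reachable x y →
      Γ'.Reachable x b ∧ Γ'.dist x b ≤ Γ'.dist x y + 1 ∧ Γ'.dist x y ≤ Γ'.dist x b + 1 := by
    intro y b hadj hr
    have hrb : Γ'.Reachable x b := hr.trans ⟨hadj.toWalk⟩
    obtain ⟨p, hp⟩ := hr.exists_walk_length_eq_dist
    obtain ⟨pb, hpb⟩ := hrb.exists_walk_length_eq_dist
    refine ⟨hrb, ?_, ?_⟩
    · have := SimpleGraph.dist_le (p.append hadj.toWalk)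
      rw [Walk.length_append, hp] at this
      simpa using this
    · have := SimpleGraph.dist_le (pb.append hadj.symm.toWalk)
      rw [Walk.length_append, hpb] at this
      simpa using this
  have F2 : ∀ (i : ℕ) (y z : V), i ≤ δ → Γ'.Adj y z → Γ'.Reachable x y → Γ'.Reachable x z →
      Γ'.dist x y = i → Γ'.dist x z = i → False := by
    intro i y z hi hadj hry hrz hdy hdz
    obtain ⟨py, hpy⟩ := hry.exists_walk_length_eq_dist
    obtain ⟨pz, hpz⟩ := hrz.exists_walk_length_eq_dist
    have hyz : y ≠ z := hadj.ne
    have hne : s(y,z) ∉ (py.reverse.append pz).edges := by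
      rw [Walk.edges_append, List.mem_append, Walk.edges_reverse]
      rintro (h | h)
      · rw [List.mem_reverse] at h
        have hz : z ∈ py.support := Walk.snd_mem_support_of_mem_edges py h
        obtain ⟨hsum, -, hr2⟩ := support_dist py hz
        rw [hpy, hdy, hdz] at hsum
        have h0 : Γ'.dist z y = 0 := by omega
        exact hyz ((hr2.dist_eq_zero_iff).mp h0).symm
      · have hy : y ∈ pz.support := Walk.fst_mem_support_of_mem_edges pz h
        obtain ⟨hsum, -, hr2⟩ := support_dist pz hy
        rw [hpz, hdz, hdy] at hsum
        have h0 : Γ'.dist y z = 0 := by omega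
        exact hyz ((hr2.dist_eq_zero_iff).mp h0)
    have := hP' hadj (py.reverse.append pz) hne
    rw [Walk.length_append, Walk.length_reverse, hpy, hpz, hdy, hdz] at this
    omega
  have F3 : ∀ (j : ℕ) (w y z : V), j + 1 ≤ δ → Γ'.Adj y w → Γ'.Adj z w → y ≠ z →
      Γ'.Reachable x y → Γ'.Reachable x z → Γ'.dist x y = j → Γ'.dist x z = j →
      Γ'.dist x w = j + 1 → False := by
    intro j w y z hj hyw hzw hyz hry hrz hdy hdz hdw
    obtain ⟨py, hpy⟩ := hry.exists_walk_length_eq_dist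
    obtain ⟨pz, hpz⟩ := hrz.exists_walk_length_eq_dist
    have hne : s(y,w) ∉ (py.reverse.append (pz.append hzw.toWalk)).edges := by
      rw [Walk.edges_append, Walk.edges_append, Walk.edges_reverse]
      simp only [List.mem_append, List.mem_reverse]
      rintro (h | h | h)
      · have hw : w ∈ py.support := Walk.snd_mem_support_of_mem_edges py h
        obtain ⟨hsum, -, -⟩ := support_dist py hw
        rw [hpy, hdy] at hsum
        have := SimpleGraph.dist_le (py.takeUntil w hw)
        have hxww : Γ'.dist x w ≤ j := by
          have h2 := (support_dist py hw).1
          rw [hpy, hdy] at h2; omega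
        omega
      · have hw : w ∈ pz.support := Walk.snd_mem_support_of_mem_edges pz h
        obtain ⟨hsum, -, -⟩ := support_dist pz hw
        rw [hpz, hdz] at hsum
        omega
      · have h' : s(y,w) ∈ hzw.toWalk.edges := h
        rw [Walk.edges_cons, Walk.edges_nil] at h'
        simp only [List.mem_singleton, Sym2.eq_iff] at h'
        rcases h' with ⟨h1, -⟩ | ⟨h1, h2⟩
        · exact hyz h1
        · exact hyw.ne h1
    have := hP' hyw (py.reverse.append (pz.append hzw.toWalk)) hne
    rw [Walk.length_append, Walk.length_append, Walk.length_reverse, hpy, hpz, hdy, hdz] at this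
    simp only [Walk.length_cons, Walk.length_nil] at this
    omega
  have hx0 : x ∈ L 0 := by
    rw [hmemL]
    exact ⟨Reachable.refl x, SimpleGraph.dist_self⟩
  have claim : ∀ i, i ≤ δ → k ^ i ≤ (L i).card := by
    intro i
    induction i with
    | zero =>
      intro _
      simpa using Finset.card_pos.mpr ⟨x, hx0⟩
    | succ i ih =>
      intro hi
      have hiδ : i ≤ δ := by omega
      have hLi := ih hiδ
      set C : V → Finset V :=
        fun y => univ.filter (fun b => Γ'.Adj y b ∧ Γ'.dist x b = i + 1) with hC
      have hCsub : ∀ y ∈ L i, C y ⊆ L (i+1) := by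
        intro y hy b hb
        rw [hmemL]
        simp only [hC, mem_filter, mem_univ, true_and] at hb
        have hyr : Γ'.Reachable x y := ((hmemL _ _).mp hy).1
        exact ⟨(F1 y b hb.1 hyr).1, hb.2⟩
      have hCcard : ∀ y ∈ L i, k ≤ (C y).card := by
        intro y hy
        obtain ⟨hyr, hyd⟩ := (hmemL _ _).mp hy
        have hyS := hLS _ _ hy
        set P : Finset V := univ.filter (fun b => Γ'.Adj y b ∧ Γ'.dist x b ≠ i + 1) with hPdef
        have hNsub : univ.filter (fun b => Γ'.Adj y b) ⊆ C y ∪ P := by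
          intro b hb
          simp only [hC, hPdef, mem_filter, mem_univ, true_and, Finset.mem_union] at *
          tauto
        have hkey : ∀ a ∈ P, Γ'.dist x a + 1 = i ∧ Γ'.Adj a y ∧ Γ'.Reachable x a := by
          intro a ha
          simp only [hPdef, mem_filter, mem_univ, true_and] at ha
          obtain ⟨hr, h2, h3⟩ := F1 y a ha.1 hyr
          refine ⟨?_, ha.1.symm, hr⟩
          rw [hyd] at h2 h3
          have hni : Γ'.dist x a ≠ i := by
            intro hcon
            exact F2 i y a hiδ ha.1 hyr hr hyd hcon
          omega
        have hP1 : P.card ≤ 1 := by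
          rw [Finset.card_le_one]
          intro a ha b hb
          by_contra hab
          obtain ⟨hda, haa, hra⟩ := hkey a ha
          obtain ⟨hdb, hab2, hrb⟩ := hkey b hb
          have hi1 : i ≥ 1 := by omega
          exact F3 (Γ'.dist x a) y a b (by omega) haa hab2 hab hra hrb rfl (by omega)
            (by omega)
        have hcu := Finset.card_le_card hNsub
        have := Finset.card_union_le (C y) P
        have hnb := hnbr y hyS
        omega
      have hdisj : ∀ y ∈ L i, ∀ z ∈ L i, y ≠ z → Disjoint (C y) (C z) := by
        intro y hy z hz hyz
        rw [Finset.disjoint_left]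
        intro b hby hbz
        simp only [hC, mem_filter, mem_univ, true_and] at hby hbz
        obtain ⟨hyr, hyd⟩ := (hmemL _ _).mp hy
        obtain ⟨hzr, hzd⟩ := (hmemL _ _).mp hz
        exact F3 i b y z hi hby.1 hbz.1 hyz hyr hzr hyd hzd hby.2
      have hbu : (L i).biUnion C ⊆ L (i+1) := Finset.biUnion_subset.mpr hCsub
      have hcard : ((L i).biUnion C).card = ∑ y ∈ L i, (C y).card :=
        Finset.card_biUnion hdisj
      calc k ^ (i+1) = k ^ i * k := pow_succ k i
        _ ≤ (L i).card * k := Nat.mul_le_mul_right k hLi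
        _ ≤ ∑ y ∈ L i, (C y).card := by
            have := Finset.card_nsmul_le_sum (L i) (fun y => (C y).card) k hCcard
            simpa [smul_eq_mul, mul_comm] using this
        _ = ((L i).biUnion C).card := hcard.symm
        _ ≤ (L (i+1)).card := Finset.card_le_card hbu
  calc k ^ δ ≤ (L δ).card := claim δ le_rfl
    _ ≤ Fintype.card V := Finset.card_le_univ _

lemma mindeg_extract {V : Type*} [Fintype V] (Γ : SimpleGraph V) [DecidableRel Γ.Adj] (d : ℕ)
    (h : ∀ S : Finset V, S.Nonempty → ∃ a ∈ S, (S.filter (fun b => Γ.Adj a b)).card ≤ d) :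
    Γ.edgeFinset.card ≤ d * Fintype.card V := by
  classical
  have claim : ∀ S : Finset V,
      ((S ×ˢ S).filter fun p => Γ.Adj p.1 p.2).card ≤ 2*d*S.card := by
    intro S
    induction S using Finset.strongInduction with
    | _ S ih =>
      rcases S.eq_empty_or_nonempty with rfl | hne
      · simp
      · obtain ⟨a, haS, hdeg⟩ := h S hne
        have hssub : S.erase a ⊂ S := Finset.erase_ssubset haS
        have hIH := ih (S.erase a) hssub
        have hsub : ((S ×ˢ S).filter fun p => Γ.Adj p.1 p.2) ⊆
            (((S.erase a ×ˢ S.erase a).filter fun p => Γ.Adj p.1 p.2) ∪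
              ({a} ×ˢ (S.filter (fun b => Γ.Adj a b)))) ∪
              ((S.filter (fun b => Γ.Adj a b)) ×ˢ {a}) := by
          intro p hp
          simp only [mem_filter, mem_product, Finset.mem_union, Finset.mem_singleton,
            Finset.mem_erase] at *
          obtain ⟨⟨h1, h2⟩, h3⟩ := hp
          by_cases e1 : p.1 = a
          · exact Or.inl (Or.inr ⟨e1, h2, e1 ▸ h3⟩)
          · by_cases e2 : p.2 = a
            · exact Or.inr ⟨⟨h1, (e2 ▸ h3).symm⟩, e2⟩
            · exact Or.inl (Or.inl ⟨⟨⟨e1, h1⟩, e2, h2⟩, h3⟩)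
        have hc1 := Finset.card_le_card hsub
        have hc2 := Finset.card_union_le
          ((((S.erase a ×ˢ S.erase a).filter fun p => Γ.Adj p.1 p.2) ∪
              ({a} ×ˢ (S.filter (fun b => Γ.Adj a b)))))
          ((S.filter (fun b => Γ.Adj a b)) ×ˢ {a})
        have hc3 := Finset.card_union_le
          ((S.erase a ×ˢ S.erase a).filter fun p => Γ.Adj p.1 p.2)
          ({a} ×ˢ (S.filter (fun b => Γ.Adj a b)))
        have hs1 : ({a} ×ˢ (S.filter (fun b => Γ.Adj a b))).card ≤ d := by
          rw [Finset.card_product, Finset.card_singleton, one_mul]; exact hdeg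
        have hs2 : ((S.filter (fun b => Γ.Adj a b)) ×ˢ ({a} : Finset V)).card ≤ d := by
          rw [Finset.card_product, Finset.card_singleton, mul_one]; exact hdeg
        have hcS : (S.erase a).card + 1 = S.card := Finset.card_erase_add_one haS
        have : 2*d*((S.erase a).card) + (d + d) = 2*d*S.card := by
          rw [← hcS]; ring
        omega
  have hpair : ((univ ×ˢ univ : Finset (V × V)).filter fun p => Γ.Adj p.1 p.2).card =
      2 * Γ.edgeFinset.card := by
    rw [← SimpleGraph.dart_card_eq_twice_card_edges]
    rw [Fintype.card]
    apply Finset.card_bij' (fun p hp => (⟨p, (Finset.mem_filter.mp hp).2⟩ : Γ.Dart))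
      (fun d _ => d.toProd)
    all_goals
      first
      | (intro p hp; rfl)
      | (intro p hp; exact Finset.mem_univ _)
      | (intro d _;
         simp only [Finset.mem_filter, Finset.mem_product, Finset.mem_univ, true_and];
         exact d.adj)
  have := claim univ
  rw [hpair] at this
  rw [Finset.card_univ] at this
  have h2 : 2*d*Fintype.card V = 2*(d*Fintype.card V) := by ring
  omega

/-- If `l` enumerates the edges of `G` (each edge of `G` occurring in at
least one orientation, and every listed pair being an edge of `G`), then the output `H`
of the greedy spanner algorithm with parameter `δ ≥ 1` is a subgraph of `G` which is a
`2δ`-approximate spanner of `G`, and `|E(H)| ≤ 2·n^(1+1/δ)` where `n = |V|`. -/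
theorem greedySpanner_spanner_and_sparse {V : Type*} [Fintype V] (G : SimpleGraph V)
    (n δ : ℕ) (hn : Fintype.card V = n) (hδ : 1 ≤ δ) (l : List (V × V))
    (hmem : ∀ e ∈ l, G.Adj e.1 e.2)
    (hcover : ∀ u v : V, G.Adj u v → (u, v) ∈ l ∨ (v, u) ∈ l) :
    greedySpanner δ l ≤ G ∧
      (∀ u v : V, G.Reachable u v →
        (greedySpanner δ l).dist u v ≤ 2 * δ * G.dist u v) ∧
      ((greedySpanner δ l).edgeSet.ncard : ℝ) ≤ 2 * (n : ℝ) ^ ((1 : ℝ) + 1 / δ) := by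
  classical
  have hle : greedySpanner δ l ≤ G := gs_le δ G l hmem
  have hinv : ∀ a b : V, G.Adj a b → (greedySpanner δ l).Reachable a b ∧
      (greedySpanner δ l).dist a b ≤ 2*δ := by
    intro a b hab
    rcases hcover a b hab with h | h
    · exact gs_edge_invariant δ hδ l _ h
    · obtain ⟨hr, hd⟩ := gs_edge_invariant δ hδ l _ h
      exact ⟨hr.symm, by rwa [SimpleGraph.dist_comm]⟩
  refine ⟨hle, fun u v hr => (gs_stretch hinv u v hr).2, ?_⟩
  have hP : NoShortCyc δ (greedySpanner δ l) := gs_noShortCyc δ l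
  haveI : DecidableRel (greedySpanner δ l).Adj := Classical.decRel _
  have hncard : (greedySpanner δ l).edgeSet.ncard = (greedySpanner δ l).edgeFinset.card := by
    rw [← SimpleGraph.coe_edgeFinset, Set.ncard_coe_finset]
  by_cases hn0 : n = 0
  · subst hn0
    haveI : IsEmpty V := Fintype.card_eq_zero_iff.mp hn
    have he : (greedySpanner δ l).edgeSet = ∅ := by
      ext e
      induction e with
      | _ a b => exact iff_of_false (fun h => IsEmpty.false a) (fun h => h.elim)
    rw [he]
    simp only [Set.ncard_empty, Nat.cast_zero]
    positivity
  · have hn1 : 1 ≤ n := Nat.one_le_iff_ne_zero.mpr hn0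
    have hnpos : (0:ℝ) < (n:ℝ) := by exact_mod_cast hn1
    set d : ℕ := Nat.floor ((n:ℝ) ^ ((1:ℝ)/δ)) + 1 with hd
    have hmd : ∀ S : Finset V, S.Nonempty →
        ∃ a ∈ S, (S.filter (fun b => (greedySpanner δ l).Adj a b)).card ≤ d := by
      intro S hS
      by_contra hcon
      push_neg at hcon
      have hmoore := moore (greedySpanner δ l) hP S hS (k := d)
        (fun a ha => hcon a ha)
      -- d^δ ≤ card V = n, but d > n^(1/δ)
      have hdgt : (n:ℝ) ^ ((1:ℝ)/δ) < (d:ℝ) := by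
        rw [hd]
        push_cast
        exact Nat.lt_floor_add_one _
      have hpow : (n:ℝ) < (d:ℝ) ^ (δ:ℕ) := by
        have h1 : ((n:ℝ) ^ ((1:ℝ)/δ)) ^ (δ:ℕ) < (d:ℝ) ^ (δ:ℕ) := by
          apply pow_lt_pow_left₀ hdgt (Real.rpow_nonneg hnpos.le _)
          omega
        rwa [← Real.rpow_natCast ((n:ℝ) ^ ((1:ℝ)/δ)) δ, ← Real.rpow_mul hnpos.le,
          one_div, inv_mul_cancel₀ (by exact_mod_cast (by omega : δ ≠ 0) : (δ:ℝ) ≠ 0),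
          Real.rpow_one] at h1
      have hcontra : (n:ℝ) < (n:ℝ) := by
        calc (n:ℝ) < (d:ℝ) ^ (δ:ℕ) := hpow
          _ ≤ (n:ℝ) := by exact_mod_cast (hn ▸ hmoore : d ^ δ ≤ n)
      exact lt_irrefl _ hcontra
    have hedge := mindeg_extract (greedySpanner δ l) d hmd
    rw [hn] at hedge
    rw [hncard]
    have hdle : (d:ℝ) ≤ (n:ℝ) ^ ((1:ℝ)/δ) + 1 := by
      rw [hd]
      push_cast
      have := Nat.floor_le (Real.rpow_nonneg hnpos.le ((1:ℝ)/δ))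
      linarith
    have hrw : (n:ℝ) ^ ((1:ℝ)/δ) * (n:ℝ) = (n:ℝ) ^ ((1:ℝ) + 1/δ) := by
      rw [Real.rpow_add hnpos, Real.rpow_one]
      ring
    have hmono : (n:ℝ) ≤ (n:ℝ) ^ ((1:ℝ) + 1/δ) := by
      have h1 : (1:ℝ) ≤ (n:ℝ) := by exact_mod_cast hn1
      calc (n:ℝ) = (n:ℝ) ^ (1:ℝ) := (Real.rpow_one _).symm
        _ ≤ (n:ℝ) ^ ((1:ℝ) + 1/δ) := by
            apply Real.rpow_le_rpow_of_exponent_le h1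
            have : (0:ℝ) ≤ 1/(δ:ℝ) := by positivity
            linarith
    calc ((greedySpanner δ l).edgeFinset.card : ℝ) ≤ (d:ℝ) * (n:ℝ) := by
          exact_mod_cast hedge
      _ ≤ ((n:ℝ) ^ ((1:ℝ)/δ) + 1) * (n:ℝ) := by
          apply mul_le_mul_of_nonneg_right hdle hnpos.le
      _ = (n:ℝ) ^ ((1:ℝ) + 1/δ) + (n:ℝ) := by rw [add_mul, one_mul, hrw]
      _ ≤ 2 * (n:ℝ) ^ ((1:ℝ) + 1/δ) := by linarith
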